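/- Let $H = Gb_* + \varepsilon$ with $G \in \mathbb{R}^{n\times p}$, and suppose: (i) $\|n^{-1}G^\top \varepsilon\|_\infty \leq \eta\sigma_*$; (ii) a vector $\hat{b}$ satisfies $\|\hat{b}\|_1 \leq \|b_*\|_1$ and $\|n^{-1}G^\top(H - G\hat{b})\|_\infty \leq \eta\tilde\sigma$ with $\tilde\sigma \geq \sigma_* > 0$; (iii) the restricted eigenvalue condition holds: for $J = \mathrm{supp}(b_*)$ with $|J| = s$, every $a \neq 0$ with $\|a_{J^c}\|_1 \leq \|a_J\|_1$ satisfies $\|Ga\|_2^2 \geq n\kappa\|a_J\|_2^2$. Then the error $\delta = \hat{b} - b_*$ satisfies $\|\delta_{J^c}\|_1 \leq \|\delta_J\|_1$, $\|\delta_J\|_2 \leq 2\sqrt{s}\,\eta(\tilde\sigma + \sigma_*)/\kappa$, and $n^{-1}\|G\delta\|_2^2 \leq 4s\eta^2(\tilde\sigma + \sigma_*)^2/\kappa$. -/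

import Mathlib

/-- Core error bound for the Dantzig-type estimator: if `H = G b_* + ε`,
`‖n⁻¹ Gᵀ ε‖∞ ≤ η σ_*`, `b̂` satisfies `‖b̂‖₁ ≤ ‖b_*‖₁` and
`‖n⁻¹ Gᵀ (H - G b̂)‖∞ ≤ η σ̃` with `σ̃ ≥ σ_* > 0`, and the restricted eigenvalue
condition holds on `J = supp(b_*)`, then for `δ = b̂ - b_*`:
`‖δ_{Jᶜ}‖₁ ≤ ‖δ_J‖₁`, `‖δ_J‖₂ ≤ 2 √s η (σ̃ + σ_*)/κ`, and
`n⁻¹ ‖G δ‖₂² ≤ 4 s η² (σ̃ + σ_*)²/κ`. -/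
theorem stmt9 {n p : ℕ} (hn : 0 < n)
    (G : Matrix (Fin n) (Fin p) ℝ) (bstar bhat : Fin p → ℝ) (ε : Fin n → ℝ)
    (H : Fin n → ℝ) (hH : H = G.mulVec bstar + ε)
    (η κ σstar σtilde : ℝ) (hη : 0 < η) (hκ : 0 < κ) (hσstar : 0 < σstar)
    (hσtilde : σstar ≤ σtilde)
    (J : Finset (Fin p)) (hJ : ∀ i, i ∈ J ↔ bstar i ≠ 0)
    (hnoise : ‖(n : ℝ)⁻¹ • G.transpose.mulVec ε‖ ≤ η * σstar)
    (hl1 : (∑ i, |bhat i|) ≤ ∑ i, |bstar i|)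
    (hfeas : ‖(n : ℝ)⁻¹ • G.transpose.mulVec (H - G.mulVec bhat)‖ ≤ η * σtilde)
    (hRE : ∀ a : Fin p → ℝ, a ≠ 0 → (∑ i ∈ Jᶜ, |a i|) ≤ (∑ i ∈ J, |a i|) →
      (n : ℝ) * κ * (∑ i ∈ J, (a i) ^ 2) ≤ ∑ i, (G.mulVec a i) ^ 2) :
    (∑ i ∈ Jᶜ, |bhat i - bstar i|) ≤ (∑ i ∈ J, |bhat i - bstar i|) ∧
      Real.sqrt (∑ i ∈ J, (bhat i - bstar i) ^ 2) ≤
        2 * Real.sqrt (J.card) * η * (σtilde + σstar) / κ ∧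
      (n : ℝ)⁻¹ * (∑ i, (G.mulVec (bhat - bstar) i) ^ 2) ≤
        4 * (J.card : ℝ) * η ^ 2 * (σtilde + σstar) ^ 2 / κ := by
  set δ : Fin p → ℝ := bhat - bstar with hδdef
  have hδi : ∀ i, δ i = bhat i - bstar i := fun i => rfl
  have hss : (0:ℝ) < σtilde + σstar := by linarith
  have hlampos : 0 < η * (σtilde + σstar) := mul_pos hη hss
  have hRHS2 : 0 ≤ 2 * Real.sqrt (J.card) * η * (σtilde + σstar) / κ :=
    div_nonneg (mul_nonneg (mul_nonneg (by positivity) hη.le) hss.le) hκ.le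
  -- supp complement
  have hJc0 : ∀ i ∈ Jᶜ, bstar i = 0 := by
    intro i hi
    by_contra h
    exact (Finset.mem_compl.mp hi) ((hJ i).mpr h)
  -- Part 1: cone condition
  have cone : (∑ i ∈ Jᶜ, |bhat i - bstar i|) ≤ ∑ i ∈ J, |bhat i - bstar i| := by
    have e1 : ∑ i ∈ Jᶜ, |bhat i - bstar i| = ∑ i ∈ Jᶜ, |bhat i| := by
      apply Finset.sum_congr rfl; intro i hi; rw [hJc0 i hi, sub_zero]
    have e2 : ∑ i ∈ Jᶜ, |bstar i| = 0 :=
      Finset.sum_eq_zero (by intro i hi; rw [hJc0 i hi, abs_zero])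
    have e3 : ∑ i ∈ J, |bhat i| + ∑ i ∈ Jᶜ, |bhat i| = ∑ i, |bhat i| :=
      Finset.sum_add_sum_compl J _
    have e3' : ∑ i ∈ J, |bstar i| + ∑ i ∈ Jᶜ, |bstar i| = ∑ i, |bstar i| :=
      Finset.sum_add_sum_compl J _
    have e4 : ∑ i ∈ J, (|bstar i| - |bhat i|) ≤ ∑ i ∈ J, |bhat i - bstar i| := by
      apply Finset.sum_le_sum
      intro i _
      have h := abs_sub_abs_le_abs_sub (bstar i) (bhat i)
      rw [abs_sub_comm] at h
      linarith
    rw [e1]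
    rw [Finset.sum_sub_distrib] at e4
    linarith
  refine ⟨cone, ?_⟩
  by_cases hδ0 : δ = 0
  · -- trivial case
    have hz : ∀ i, bhat i - bstar i = 0 := by
      intro i; have := congrFun hδ0 i; simpa [hδi] using this
    have h2 : ∑ i ∈ J, (bhat i - bstar i) ^ 2 = 0 :=
      Finset.sum_eq_zero (by intro i _; rw [hz i]; ring)
    have h3 : G.mulVec (bhat - bstar) = 0 := by
      rw [show bhat - bstar = δ from rfl, hδ0, Matrix.mulVec_zero]
    constructor
    · rw [h2, Real.sqrt_zero]; exact hRHS2
    · rw [h3]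
      simp only [Pi.zero_apply]
      rw [Finset.sum_const, nsmul_eq_mul]
      simp only [ne_eq, OfNat.ofNat_ne_zero, not_false_eq_true, zero_pow, mul_zero]
      positivity
  · -- main case
    -- ℓ∞ bound on the correlation vector
    have hGδ : G.mulVec δ = ε - (H - G.mulVec bhat) := by
      rw [hH, hδdef, Matrix.mulVec_sub]
      ext i
      simp [Pi.sub_apply, Pi.add_apply]
      ring
    have hcorr : ‖(n : ℝ)⁻¹ • G.transpose.mulVec (G.mulVec δ)‖ ≤ η * (σstar + σtilde) := by
      rw [hGδ, Matrix.mulVec_sub, smul_sub]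
      calc ‖(n : ℝ)⁻¹ • G.transpose.mulVec ε - (n : ℝ)⁻¹ • G.transpose.mulVec (H - G.mulVec bhat)‖
          ≤ ‖(n : ℝ)⁻¹ • G.transpose.mulVec ε‖ + ‖(n : ℝ)⁻¹ • G.transpose.mulVec (H - G.mulVec bhat)‖ :=
            norm_sub_le _ _
        _ ≤ η * σstar + η * σtilde := add_le_add hnoise hfeas
        _ = η * (σstar + σtilde) := by ring
    set A : Fin p → ℝ := (n : ℝ)⁻¹ • G.transpose.mulVec (G.mulVec δ) with hAdef
    have hAj : ∀ j, |A j| ≤ η * (σtilde + σstar) := by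
      intro j
      have h := norm_le_pi_norm A j
      rw [Real.norm_eq_abs] at h
      calc |A j| ≤ ‖A‖ := h
        _ ≤ η * (σstar + σtilde) := hcorr
        _ = η * (σtilde + σstar) := by ring
    -- energy identity
    have energy : (n : ℝ)⁻¹ * (∑ i, (G.mulVec δ i) ^ 2) = ∑ j, A j * δ j := by
      have key : ∑ i, (G.mulVec δ i) ^ 2 = ∑ j, (G.transpose.mulVec (G.mulVec δ)) j * δ j := by
        have h1 : dotProduct (G.mulVec δ) (G.mulVec δ)
            = dotProduct (Matrix.vecMul (G.mulVec δ) G) δ :=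
          Matrix.dotProduct_mulVec _ _ _
        rw [Matrix.mulVec_transpose]
        simpa [dotProduct, pow_two] using h1
      rw [key, Finset.mul_sum]
      apply Finset.sum_congr rfl
      intro j _
      rw [hAdef]
      simp [mul_assoc]
    -- ℓ1 bound on δ restricted to J, via Cauchy–Schwarz
    set T : ℝ := ∑ i ∈ J, (δ i) ^ 2 with hTdef
    have hT0 : 0 ≤ T := Finset.sum_nonneg (by intro i _; positivity)
    have hCS : (∑ i ∈ J, |δ i|) ≤ Real.sqrt (J.card) * Real.sqrt T := by
      have h := Finset.sum_mul_sq_le_sq_mul_sq J (fun _ => (1 : ℝ)) (fun i => |δ i|)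
      simp only [one_mul, one_pow, Finset.sum_const, nsmul_eq_mul, mul_one, sq_abs] at h
      have h1 : (∑ i ∈ J, |δ i|) = Real.sqrt ((∑ i ∈ J, |δ i|) ^ 2) := by
        rw [Real.sqrt_sq (Finset.sum_nonneg (by intro i _; positivity))]
      rw [h1, ← Real.sqrt_mul (x := (J.card : ℝ)) (Nat.cast_nonneg _)]
      exact Real.sqrt_le_sqrt h
    -- main energy bound
    have hsum : (∑ j, A j * δ j) ≤ (η * (σtilde + σstar)) * (2 * (∑ i ∈ J, |δ i|)) := by
      calc (∑ j, A j * δ j) ≤ ∑ j, (η * (σtilde + σstar)) * |δ j| := by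
            apply Finset.sum_le_sum
            intro j _
            calc A j * δ j ≤ |A j * δ j| := le_abs_self _
              _ = |A j| * |δ j| := abs_mul _ _
              _ ≤ (η * (σtilde + σstar)) * |δ j| :=
                  mul_le_mul_of_nonneg_right (hAj j) (abs_nonneg _)
        _ = (η * (σtilde + σstar)) * (∑ j, |δ j|) := by rw [← Finset.mul_sum]
        _ ≤ (η * (σtilde + σstar)) * (2 * (∑ i ∈ J, |δ i|)) := by
            apply mul_le_mul_of_nonneg_left _ (le_of_lt hlampos)
            have := Finset.sum_add_sum_compl J (fun i => |δ i|)
            have hcone : (∑ i ∈ Jᶜ, |δ i|) ≤ ∑ i ∈ J, |δ i| := by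
              simpa [hδi] using cone
            linarith
    have hcone' : (∑ i ∈ Jᶜ, |δ i|) ≤ ∑ i ∈ J, |δ i| := by simpa [hδi] using cone
    have hREδ := hRE δ hδ0 hcone'
    have hn' : (0 : ℝ) < n := by exact_mod_cast hn
    -- κ T ≤ n⁻¹ ‖Gδ‖²
    have hRE2 : κ * T ≤ (n : ℝ)⁻¹ * (∑ i, (G.mulVec δ i) ^ 2) := by
      rw [le_inv_mul_iff₀ hn', ← mul_assoc]
      exact hREδ
    have hchain : κ * T ≤ (η * (σtilde + σstar)) * (2 * (Real.sqrt (J.card) * Real.sqrt T)) := by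
      calc κ * T ≤ (n : ℝ)⁻¹ * (∑ i, (G.mulVec δ i) ^ 2) := hRE2
        _ = ∑ j, A j * δ j := energy
        _ ≤ (η * (σtilde + σstar)) * (2 * (∑ i ∈ J, |δ i|)) := hsum
        _ ≤ (η * (σtilde + σstar)) * (2 * (Real.sqrt (J.card) * Real.sqrt T)) := by
            apply mul_le_mul_of_nonneg_left _ (le_of_lt hlampos)
            linarith [hCS]
    -- derive √T bound
    have hsqrtT : Real.sqrt T ≤ 2 * Real.sqrt (J.card) * η * (σtilde + σstar) / κ := by
      rcases eq_or_lt_of_le (Real.sqrt_nonneg T) with h0 | h0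
      · rw [← h0]; exact hRHS2
      · have hTsq : Real.sqrt T * Real.sqrt T = T := Real.mul_self_sqrt hT0
        have : κ * (Real.sqrt T * Real.sqrt T) ≤
            (2 * Real.sqrt (J.card) * η * (σtilde + σstar)) * Real.sqrt T := by
          rw [hTsq]; nlinarith [hchain]
        have h2 : κ * Real.sqrt T ≤ 2 * Real.sqrt (J.card) * η * (σtilde + σstar) := by
          have := mul_le_mul_of_nonneg_right (le_refl (1:ℝ)) (le_of_lt h0)
          nlinarith [this]
        rw [le_div_iff₀ hκ]
        linarith [h2]
    have hsJ : Real.sqrt (J.card) * Real.sqrt (J.card) = (J.card : ℝ) :=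
      Real.mul_self_sqrt (by positivity)
    constructor
    · have : (∑ i ∈ J, (bhat i - bstar i) ^ 2) = T := by
        rw [hTdef]; apply Finset.sum_congr rfl; intro i _; rw [hδi]
      rw [this]; exact hsqrtT
    · have heq : (∑ i, (G.mulVec (bhat - bstar) i) ^ 2) = ∑ i, (G.mulVec δ i) ^ 2 := rfl
      rw [heq]
      calc (n : ℝ)⁻¹ * (∑ i, (G.mulVec δ i) ^ 2)
          = ∑ j, A j * δ j := energy
        _ ≤ (η * (σtilde + σstar)) * (2 * (Real.sqrt (J.card) * Real.sqrt T)) := by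
            calc (∑ j, A j * δ j) ≤ (η * (σtilde + σstar)) * (2 * (∑ i ∈ J, |δ i|)) := hsum
              _ ≤ _ := by
                  apply mul_le_mul_of_nonneg_left _ (le_of_lt hlampos)
                  linarith [hCS]
        _ ≤ (η * (σtilde + σstar)) * (2 * (Real.sqrt (J.card) *
              (2 * Real.sqrt (J.card) * η * (σtilde + σstar) / κ))) := by
            apply mul_le_mul_of_nonneg_left _ (le_of_lt hlampos)
            have hs : (0:ℝ) ≤ Real.sqrt (J.card) := Real.sqrt_nonneg _
            exact mul_le_mul_of_nonneg_left
              (mul_le_mul_of_nonneg_left hsqrtT hs) (by norm_num)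
        _ = (Real.sqrt (J.card) * Real.sqrt (J.card)) * (4 * η ^ 2 * (σtilde + σstar) ^ 2) / κ := by
            ring
        _ = 4 * (J.card : ℝ) * η ^ 2 * (σtilde + σstar) ^ 2 / κ := by
            rw [hsJ]; ring
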